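/- Let Y be a real random variable whose law is symmetric (invariant under y ↦ −y) and satisfies E|Y| < ∞, and let f : ℝ → ℝ be continuously differentiable with bounded derivative. Then for every x ∈ ℝ, E[f(x+Y)] − f(x) = ∫_0^∞ ((f'(x+z) − f'(x−z))/2) · P(|Y| ≥ z) dz, the integral on the right being absolutely convergent. -/

import Mathlib

open MeasureTheory Real Filter
open scoped ENNReal NNReal

theorem stmt2
    (ν : Measure ℝ) [IsProbabilityMeasure ν]
    (hsym : ν.map (fun y : ℝ => -y) = ν)
    (hmom : Integrable (fun y : ℝ => |y|) ν)
    (f : ℝ → ℝ) (hf : ContDiff ℝ 1 f) (hfb' : ∃ C, ∀ x, |deriv f x| ≤ C)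
    (x : ℝ) :
    IntegrableOn
      (fun z => (deriv f (x + z) - deriv f (x - z)) / 2 * (ν {y | z ≤ |y|}).toReal)
      (Set.Ioi (0 : ℝ)) ∧
    (∫ y, f (x + y) ∂ν) - f x =
      ∫ z in Set.Ioi (0 : ℝ),
        (deriv f (x + z) - deriv f (x - z)) / 2 * (ν {y | z ≤ |y|}).toReal := by
  obtain ⟨C₀, hC₀⟩ := hfb'
  set C : ℝ := max C₀ 0 with hCdef
  have hC0 : 0 ≤ C := le_max_right _ _
  have hC : ∀ t, |deriv f t| ≤ C := fun t => (hC₀ t).trans (le_max_left _ _)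
  set g : ℝ → ℝ := fun z => (deriv f (x + z) - deriv f (x - z)) / 2 with hgdef
  set F : ℝ → ℝ := fun z => (ν {y | z ≤ |y|}).toReal with hFdef
  have hdcont : Continuous (deriv f) := hf.continuous_deriv le_rfl
  have hgcont : Continuous g := by
    exact ((hdcont.comp (continuous_const.add continuous_id)).sub
      (hdcont.comp (continuous_const.sub continuous_id))).div_const 2
  have hgbd : ∀ z, |g z| ≤ C := by
    intro z
    have : |deriv f (x + z) - deriv f (x - z)| ≤ C + C :=
      (abs_sub _ _).trans (add_le_add (hC _) (hC _))
    calc |g z| = |deriv f (x + z) - deriv f (x - z)| / 2 := by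
          rw [hgdef]; simp [abs_div]
      _ ≤ (C + C) / 2 := by linarith
      _ = C := by ring
  -- measurability of the tail function
  have hanti : Antitone (fun z : ℝ => ν {y | z ≤ |y|}) := by
    intro a b hab
    exact measure_mono (fun y hy => le_trans hab hy)
  have hFmeas : Measurable F := ENNReal.measurable_toReal.comp hanti.measurable
  -- layer cake / finiteness
  have hlayer : ∫⁻ z in Set.Ioi (0 : ℝ), ν {y | z ≤ |y|} = ∫⁻ y, ENNReal.ofReal |y| ∂ν :=
    (lintegral_eq_lintegral_meas_le ν (Eventually.of_forall fun y => abs_nonneg y)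
      hmom.aemeasurable).symm
  have hfin : ∫⁻ y, ENNReal.ofReal |y| ∂ν < ⊤ := by
    have := hmom.hasFiniteIntegral
    rw [hasFiniteIntegral_iff_norm] at this
    simpa [Real.norm_eq_abs, abs_abs] using this
  have hFint : IntegrableOn F (Set.Ioi (0 : ℝ)) := by
    refine ⟨hFmeas.aestronglyMeasurable, ?_⟩
    rw [hasFiniteIntegral_iff_norm]
    calc (∫⁻ z in Set.Ioi (0:ℝ), ENNReal.ofReal ‖F z‖)
        ≤ ∫⁻ z in Set.Ioi (0:ℝ), ν {y | z ≤ |y|} := by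
          refine lintegral_mono fun z => ?_
          rw [Real.norm_eq_abs, abs_of_nonneg ENNReal.toReal_nonneg]
          exact ENNReal.ofReal_toReal_le
      _ < ⊤ := by rw [hlayer]; exact hfin
  have hInt1 : IntegrableOn (fun z => g z * F z) (Set.Ioi (0:ℝ)) :=
    hFint.bdd_mul (c := C) hgcont.aestronglyMeasurable (Filter.Eventually.of_forall fun z => by
      simpa [Real.norm_eq_abs] using hgbd z)
  refine ⟨hInt1, ?_⟩
  -- derivative facts
  have hdf : ∀ t : ℝ, HasDerivAt f (deriv f t) t := fun t =>
    ((hf.differentiable one_ne_zero) t).hasDerivAt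
  have h1 : ∀ t : ℝ, HasDerivAt (fun t => f (x + t)) (deriv f (x + t)) t := by
    intro t
    have := HasDerivAt.comp t (hdf (x + t)) ((hasDerivAt_id t).const_add x)
    simpa [Function.comp_def] using this
  have h2 : ∀ t : ℝ, HasDerivAt (fun t => f (x - t)) (-deriv f (x - t)) t := by
    intro t
    have := HasDerivAt.comp t (hdf (x - t)) ((hasDerivAt_id t).const_sub x)
    simpa [Function.comp_def] using this
  set φ : ℝ → ℝ := fun t => (f (x + t) + f (x - t)) / 2 with hφdef
  have hφ : ∀ t : ℝ, HasDerivAt φ (g t) t := by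
    intro t
    have := ((h1 t).add (h2 t)).div_const 2
    simpa [hgdef, sub_eq_add_neg, hφdef] using this
  -- FTC
  have hFTC : ∀ y : ℝ, ∫ t in (0:ℝ)..|y|, g t = (f (x + y) + f (x - y)) / 2 - f x := by
    intro y
    have h0 : ∫ t in (0:ℝ)..|y|, g t = φ |y| - φ 0 :=
      intervalIntegral.integral_eq_sub_of_hasDerivAt (fun t _ => hφ t)
        (hgcont.intervalIntegrable 0 |y|)
    rw [h0]
    have hφ0 : φ 0 = f x := by simp [hφdef]
    have hφy : φ |y| = (f (x + y) + f (x - y)) / 2 := by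
      rcases abs_cases y with ⟨h, _⟩ | ⟨h, _⟩
      · rw [h]
      · rw [h, hφdef]
        simp only [sub_neg_eq_add, ← sub_eq_add_neg]
        ring
    rw [hφ0, hφy]
  -- Lipschitz bound
  have hlip : LipschitzWith (Real.toNNReal C) f := by
    apply lipschitzWith_of_nnnorm_deriv_le (hf.differentiable one_ne_zero)
    intro t
    rw [← NNReal.coe_le_coe, coe_nnnorm, Real.norm_eq_abs, Real.coe_toNNReal C hC0]
    exact hC t
  have hlipd : ∀ a b : ℝ, |f a - f b| ≤ C * |a - b| := by
    intro a b
    have := hlip.dist_le_mul a b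
    rwa [Real.dist_eq, Real.dist_eq, Real.coe_toNNReal C hC0] at this
  -- integrability of the two translates
  have hIplus : Integrable (fun y => f (x + y) - f x) ν := by
    refine Integrable.mono' (hmom.const_mul C) ?_ ?_
    · exact ((hf.continuous.comp (continuous_const.add continuous_id)).sub
        continuous_const).aestronglyMeasurable
    · refine Eventually.of_forall fun y => ?_
      rw [Real.norm_eq_abs]
      simpa using hlipd (x + y) x
  have hIminus : Integrable (fun y => f (x - y) - f x) ν := by
    refine Integrable.mono' (hmom.const_mul C) ?_ ?_
    · exact ((hf.continuous.comp (continuous_const.sub continuous_id)).sub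
        continuous_const).aestronglyMeasurable
    · refine Eventually.of_forall fun y => ?_
      rw [Real.norm_eq_abs]
      simpa using hlipd (x - y) x
  -- step 1: LHS = ∫ (f (x+y) - f x)
  have step1 : (∫ y, f (x + y) ∂ν) - f x = ∫ y, (f (x + y) - f x) ∂ν := by
    have hI : Integrable (fun y => f (x + y)) ν :=
      (hIplus.add (integrable_const (f x))).congr (Eventually.of_forall fun y => by simp)
    rw [integral_sub hI (integrable_const (f x)), integral_const]
    simp
  -- step 2: symmetry
  have step2 : ∫ y, (f (x + y) - f x) ∂ν = ∫ y, (f (x - y) - f x) ∂ν := by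
    have hm : AEStronglyMeasurable (fun y => f (x + y) - f x)
        (ν.map (fun y : ℝ => -y)) := by
      rw [hsym]; exact hIplus.aestronglyMeasurable
    calc ∫ y, (f (x + y) - f x) ∂ν
        = ∫ y, (f (x + y) - f x) ∂(ν.map (fun y : ℝ => -y)) := by rw [hsym]
      _ = ∫ y, (f (x + -y) - f x) ∂ν := integral_map measurable_neg.aemeasurable hm
      _ = ∫ y, (f (x - y) - f x) ∂ν := by simp only [← sub_eq_add_neg]
  -- step 3: average
  set h : ℝ → ℝ := fun y => ((f (x + y) - f x) + (f (x - y) - f x)) / 2 with hhdef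
  have step3 : ∫ y, (f (x + y) - f x) ∂ν = ∫ y, h y ∂ν := by
    have : ∫ y, h y ∂ν
        = ((∫ y, (f (x + y) - f x) ∂ν) + ∫ y, (f (x - y) - f x) ∂ν) / 2 := by
      rw [hhdef]
      simp only [integral_div]
      rw [integral_add hIplus hIminus]
    rw [this, ← step2]
    ring
  -- the two-variable kernel
  set k : ℝ → ℝ → ℝ := fun t y => if t ≤ |y| then g t else 0 with hkdef
  set μ : Measure ℝ := volume.restrict (Set.Ioi (0:ℝ)) with hμdef
  -- inner integral over t
  have hinner_t : ∀ y : ℝ, ∫ t, k t y ∂μ = h y := by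
    intro y
    have e1 : (fun t => k t y) = (Set.Iic |y|).indicator g := by
      funext t
      simp [hkdef, Set.indicator_apply]
    rw [hμdef, e1, integral_indicator measurableSet_Iic,
      Measure.restrict_restrict measurableSet_Iic]
    have e2 : Set.Iic |y| ∩ Set.Ioi (0:ℝ) = Set.Ioc 0 |y| := by
      ext t; simp [and_comm]
    rw [e2, ← intervalIntegral.integral_of_le (abs_nonneg y), hFTC y, hhdef]
    ring
  -- inner integral over y
  have hinner_y : ∀ t : ℝ, ∫ y, k t y ∂ν = g t * F t := by
    intro t
    have e1 : (fun y => k t y) = Set.indicator {y : ℝ | t ≤ |y|} (fun _ => g t) := by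
      funext y
      simp [hkdef, Set.indicator_apply]
    have hms : MeasurableSet {y : ℝ | t ≤ |y|} :=
      measurableSet_le measurable_const measurable_abs
    rw [e1, integral_indicator_const _ hms]
    simp [hFdef, mul_comm, Measure.real]
  -- integrability of the kernel on the product
  have hms2 : MeasurableSet {p : ℝ × ℝ | p.1 ≤ |p.2|} :=
    measurableSet_le measurable_fst measurable_snd.abs
  have hkmeas : AEStronglyMeasurable (fun p : ℝ × ℝ => k p.1 p.2) (μ.prod ν) := by
    have : (fun p : ℝ × ℝ => k p.1 p.2)
        = Set.indicator {p : ℝ × ℝ | p.1 ≤ |p.2|} (fun p => g p.1) := by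
      funext p
      simp [hkdef, Set.indicator_apply]
    rw [this]
    exact ((hgcont.measurable.comp measurable_fst).indicator hms2).aestronglyMeasurable
  have hkint : Integrable (fun p : ℝ × ℝ => k p.1 p.2) (μ.prod ν) := by
    rw [integrable_prod_iff hkmeas]
    constructor
    · refine Eventually.of_forall fun t => ?_
      have e1 : (fun y => k t y) = Set.indicator {y : ℝ | t ≤ |y|} (fun _ => g t) := by
        funext y; simp [hkdef, Set.indicator_apply]
      rw [e1]
      exact (integrable_const (g t)).indicator
        (measurableSet_le measurable_const measurable_abs)
    · have e2 : (fun t => ∫ y, ‖k t y‖ ∂ν) = fun t => |g t| * F t := by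
        funext t
        have e1 : (fun y => ‖k t y‖) = Set.indicator {y : ℝ | t ≤ |y|} (fun _ => |g t|) := by
          funext y
          by_cases hy : t ≤ |y| <;>
            simp [hkdef, Set.indicator_apply, hy, Real.norm_eq_abs]
        rw [e1, integral_indicator_const _ (measurableSet_le measurable_const measurable_abs)]
        simp [hFdef, mul_comm, Measure.real]
      rw [e2]
      exact hFint.bdd_mul (c := C) (hgcont.abs.aestronglyMeasurable) (Filter.Eventually.of_forall fun z => by
        simpa [Real.norm_eq_abs, abs_abs] using hgbd z)
  -- Fubini
  have hswap : ∫ y, (∫ t, k t y ∂μ) ∂ν = ∫ t, (∫ y, k t y ∂ν) ∂μ :=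
    (integral_integral_swap hkint).symm
  calc (∫ y, f (x + y) ∂ν) - f x
      = ∫ y, h y ∂ν := by rw [step1, step3]
    _ = ∫ y, (∫ t, k t y ∂μ) ∂ν := by
        congr 1; funext y; rw [hinner_t y]
    _ = ∫ t, (∫ y, k t y ∂ν) ∂μ := hswap
    _ = ∫ t, g t * F t ∂μ := by
        congr 1; funext t; rw [hinner_y t]
    _ = ∫ z in Set.Ioi (0:ℝ),
          (deriv f (x + z) - deriv f (x - z)) / 2 * (ν {y | z ≤ |y|}).toReal := rfl
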